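/- Let (S,d) be a metric space with remote point ∞, let o ∈ S, and let φ be a d-Möbius map of S ∪ {∞} with φ² = id and φ(∞) = o (hence φ(o) = ∞). Then there exists β > 0 such that d(o,p)·d(o,φ(p)) = β² for every p ∈ S \ {o}, and moreover d(φ(p),φ(q)) = β²·d(p,q)/(d(o,p)·d(o,q)) for all p,q ∈ S \ {o}. -/

import Mathlib

open OnePoint

/-- Extended distance on `S ∪ {∞}` used in the metric cross-ratio: a pair involving the
remote point `∞` contributes the factor `1` (the `+∞` terms cancel in the cross-ratio). -/
noncomputable def extD {S : Type*} [MetricSpace S] : OnePoint S → OnePoint S → ℝ :=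
  fun x y => match x, y with
  | Option.some p, Option.some q => dist p q
  | _, _ => 1

/-- The metric cross-ratio `|X^d|(p₁,p₂,p₃,p₄) = (d(p₄,p₂)/d(p₄,p₁))·(d(p₃,p₁)/d(p₃,p₂))`. -/
noncomputable def crossRatio {S : Type*} [MetricSpace S] (p₁ p₂ p₃ p₄ : OnePoint S) : ℝ :=
  (extD p₄ p₂ / extD p₄ p₁) * (extD p₃ p₁ / extD p₃ p₂)

/-- A homeomorphism of `S ∪ {∞}` is `d`-Möbius if it preserves the metric cross-ratio of
every quadruple of pairwise distinct points. -/
def IsMobius {S : Type*} [MetricSpace S] (φ : OnePoint S → OnePoint S) : Prop :=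
  ∀ p₁ p₂ p₃ p₄ : OnePoint S, [p₁, p₂, p₃, p₄].Pairwise (· ≠ ·) →
    crossRatio (φ p₁) (φ p₂) (φ p₃) (φ p₄) = crossRatio p₁ p₂ p₃ p₄


section Aux
variable {S : Type*} [MetricSpace S]

lemma extD_coe_coe (p q : S) : extD (S := S) ↑p ↑q = dist p q := rfl
lemma extD_coe_infty (p : S) : extD (S := S) ↑p ∞ = 1 := rfl
lemma extD_infty_coe (p : S) : extD (S := S) ∞ ↑p = 1 := rfl

end Aux

/-- Let `φ` be a `d`-Möbius map of `S ∪ {∞}` with `φ² = id` and `φ(∞) = o` (hence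
`φ(o) = ∞`). Then there is `β > 0` with `d(o,p)·d(o,φ(p)) = β²` for every `p ∈ S \ {o}`,
and `d(φ(p),φ(q)) = β²·d(p,q)/(d(o,p)·d(o,q))` for all `p,q ∈ S \ {o}`. -/
theorem mobius_inversion_properties {S : Type*} [MetricSpace S] (o : S)
    (htwo : ∃ p q : S, p ≠ q ∧ p ≠ o ∧ q ≠ o)
    (φ : OnePoint S ≃ₜ OnePoint S) (hφ : IsMobius φ)
    (hinv : ∀ x : OnePoint S, φ (φ x) = x) (hinfty : φ ∞ = ↑o) :
    ∃ β : ℝ, 0 < β ∧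
      (∀ p p' : S, p ≠ o → φ (↑p) = ↑p' → dist o p * dist o p' = β ^ 2) ∧
      (∀ p q p' q' : S, p ≠ o → q ≠ o → φ (↑p) = ↑p' → φ (↑q) = ↑q' →
        dist p' q' = β ^ 2 * dist p q / (dist o p * dist o q)) := by
  obtain ⟨a, b, hab, hao, hbo⟩ := htwo
  have hφo : φ (↑o : OnePoint S) = ∞ := by
    have h := hinv ∞; rw [hinfty] at h; exact h
  -- basic facts about images
  have hprime : ∀ p p' : S, p ≠ o → φ (↑p) = ↑p' → p' ≠ o := by
    intro p p' hp hpp' hp'o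
    subst hp'o
    rw [← hinfty] at hpp'
    have := φ.injective hpp'
    exact (OnePoint.coe_ne_infty p) this
  -- key lemma 1: constancy of the product
  have key1 : ∀ p q p' q' : S, p ≠ o → q ≠ o → p ≠ q →
      φ (↑p) = ↑p' → φ (↑q) = ↑q' →
      dist o p * dist o p' = dist o q * dist o q' := by
    intro p q p' q' hp hq hpq hp' hq'
    have hp'o := hprime p p' hp hp'
    have hq'o := hprime q q' hq hq'
    have hpair : [(∞ : OnePoint S), ↑o, ↑p, ↑q].Pairwise (· ≠ ·) := by
      simp only [List.pairwise_cons, List.mem_cons, List.not_mem_nil, or_false,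
        List.mem_singleton, List.Pairwise.nil, and_true]
      refine ⟨?_, ?_, ?_⟩
      · rintro x (rfl | rfl | rfl) <;> exact (OnePoint.infty_ne_coe _)
      · rintro x (rfl | rfl)
        · exact fun h => hp (OnePoint.coe_injective h).symm
        · exact fun h => hq (OnePoint.coe_injective h).symm
      · simp [OnePoint.coe_eq_coe]; exact hpq
    have h := hφ ∞ ↑o ↑p ↑q hpair
    rw [hinfty, hφo, hp', hq'] at h
    simp only [crossRatio, extD_coe_coe, extD_coe_infty, extD_infty_coe] at h
    have d1 : dist p o ≠ 0 := fun h0 => hp (by simpa using dist_eq_zero.mp h0)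
    have d2 : dist q o ≠ 0 := fun h0 => hq (by simpa using dist_eq_zero.mp h0)
    have d3 : dist p' o ≠ 0 := fun h0 => hp'o (by simpa using dist_eq_zero.mp h0)
    have d4 : dist q' o ≠ 0 := fun h0 => hq'o (by simpa using dist_eq_zero.mp h0)
    rw [dist_comm o p, dist_comm o p', dist_comm o q, dist_comm o q']
    field_simp at h
    nlinarith [h]
  -- fix a base point
  obtain ⟨a', ha'⟩ : ∃ a' : S, φ (↑a) = ↑a' := by
    cases' h : φ (↑a : OnePoint S) with a'
    · exfalso
      have := φ.injective (h.trans hφo.symm)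
      exact hao (OnePoint.coe_injective this)
    · exact ⟨a', rfl⟩
  have ha'o := hprime a a' hao ha'
  have hdao : 0 < dist o a := dist_pos.mpr (Ne.symm hao)
  have hda'o : 0 < dist o a' := dist_pos.mpr (Ne.symm ha'o)
  set β : ℝ := Real.sqrt (dist o a * dist o a') with hβ
  have hβpos : 0 < β := Real.sqrt_pos.mpr (by positivity)
  have hβsq : β ^ 2 = dist o a * dist o a' := Real.sq_sqrt (by positivity)
  have prod_eq : ∀ p p' : S, p ≠ o → φ (↑p) = ↑p' → dist o p * dist o p' = β ^ 2 := by
    intro p p' hp hp'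
    rw [hβsq]
    rcases eq_or_ne p a with rfl | hpa
    · rw [ha'] at hp'
      obtain rfl : p' = a' := (OnePoint.coe_injective hp').symm
      rfl
    · exact key1 p a p' a' hp hao hpa hp' ha'
  refine ⟨β, hβpos, prod_eq, ?_⟩
  intro p q p' q' hp hq hp' hq'
  have hp'o := hprime p p' hp hp'
  have hq'o := hprime q q' hq hq'
  rcases eq_or_ne p q with rfl | hpq
  · obtain rfl : p' = q' := OnePoint.coe_injective ((hp'.symm.trans hq'))
    simp
  · have hpair : [(∞ : OnePoint S), ↑p, ↑q, ↑o].Pairwise (· ≠ ·) := by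
      simp only [List.pairwise_cons, List.mem_cons, List.not_mem_nil, or_false,
        List.mem_singleton, List.Pairwise.nil, and_true]
      refine ⟨?_, ?_, ?_⟩
      · rintro x (rfl | rfl | rfl) <;> exact (OnePoint.infty_ne_coe _)
      · rintro x (rfl | rfl) <;> simp [OnePoint.coe_eq_coe]
        · exact hpq
        · exact hp
      · simp [OnePoint.coe_eq_coe]; exact hq
    have h := hφ ∞ ↑p ↑q ↑o hpair
    rw [hinfty, hφo, hp', hq'] at h
    simp only [crossRatio, extD_coe_coe, extD_coe_infty, extD_infty_coe] at h
    have d1 : dist o p ≠ 0 := (dist_pos.mpr (Ne.symm hp)).ne'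
    have d2 : dist o q ≠ 0 := (dist_pos.mpr (Ne.symm hq)).ne'
    have d3 : dist o q' ≠ 0 := (dist_pos.mpr (Ne.symm hq'o)).ne'
    have d4 : dist p q ≠ 0 := (dist_pos.mpr hpq).ne'
    have hqq' : dist o q * dist o q' = β ^ 2 := prod_eq q q' hq hq'
    have hp'q' : p' ≠ q' := fun e => hpq (OnePoint.coe_injective (φ.injective
      (by rw [hp', hq', e])))
    have d5 : dist q' p' ≠ 0 := (dist_pos.mpr (Ne.symm hp'q')).ne'
    field_simp at h
    rw [dist_comm q' o, dist_comm q' p'] at h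
    have d4' : dist q p ≠ 0 := fun e => hpq (dist_eq_zero.mp e).symm
    have h5 : dist o q' * dist p q = dist o p * dist p' q' := by
      rw [dist_comm p q, h, div_mul_cancel₀ _ d4', mul_comm]
    rw [eq_div_iff (by positivity : (dist o p * dist o q) ≠ 0)]
    calc dist p' q' * (dist o p * dist o q)
        = (dist o p * dist p' q') * dist o q := by ring
      _ = (dist o q' * dist p q) * dist o q := by rw [h5]
      _ = (dist o q * dist o q') * dist p q := by ring
      _ = β ^ 2 * dist p q := by rw [hqq']
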